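/- (Monotonicity of discrepancy in subsets, first-order case) Let X_w, Z_{w0}, Z_{~u} be mutually independent random vectors and g integrable. Set G_w^{fo} := E_{Z_{w0}, Z_{~u}}[g] − E[g] and G_u^{fo} := E_{Z_{~u}}[g] − E[g], so that G_w^{fo} = E_{Z_{w0}}[G_u^{fo}]. If k is a convex positive definite kernel (in each argument), then E[k(G_w^{fo}, G_w^{fo'})] ≤ E[k(G_u^{fo}, G_u^{fo'})], where primes denote evaluation at independent copies. -/

import Mathlib

open MeasureTheory ProbabilityTheory

/-- Existence of a subgradient for a convex continuous function. -/
lemma exists_subgradient_aux {E : Type*} [NormedAddCommGroup E] [NormedSpace ℝ E]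
    (φ : E → ℝ) (hφ : ConvexOn ℝ Set.univ φ) (hc : Continuous φ) (x₀ : E) :
    ∃ ℓ : E →L[ℝ] ℝ, ∀ x, φ x₀ + ℓ (x - x₀) ≤ φ x := by
  set s : Set (E × ℝ) := {p | φ p.1 < p.2} with hs_def
  have hs_open : IsOpen s := isOpen_lt (hc.comp continuous_fst) continuous_snd
  have hs_conv : Convex ℝ s := by
    rintro ⟨a, t⟩ hat ⟨b, u⟩ hbu θ τ hθ hτ hθτ
    simp only [hs_def, Set.mem_setOf_eq] at hat hbu ⊢
    have h1 : φ (θ • a + τ • b) ≤ θ * φ a + τ * φ b :=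
      hφ.2 trivial trivial hθ hτ hθτ
    have h2 : θ * φ a + τ * φ b < θ * t + τ * u := by
      rcases eq_or_lt_of_le hθ with h | h
      · simp only [← h, zero_mul, zero_add]
        have : τ = 1 := by linarith
        simpa [this] using hbu
      · rcases eq_or_lt_of_le hτ with h' | h'
        · simp only [← h', zero_mul, add_zero]
          have : θ = 1 := by linarith
          simpa [this] using hat
        · exact add_lt_add (by nlinarith) (by nlinarith)
    simpa using h1.trans_lt h2
  have hx₀ : (x₀, φ x₀) ∉ s := by simp [hs_def]
  obtain ⟨f, hf⟩ := geometric_hahn_banach_open_point hs_conv hs_open hx₀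
  set c : ℝ := f (0, 1) with hc_def
  have hdecomp : ∀ x : E, ∀ t : ℝ, f (x, t) = f (x, 0) + t * c := by
    intro x t
    have : (x, t) = (x, (0 : ℝ)) + t • ((0 : E), (1 : ℝ)) := by
      simp [Prod.ext_iff]
    rw [this, map_add, f.map_smul]
    simp [hc_def, smul_eq_mul]
  have hc_neg : c < 0 := by
    have h1 : f (x₀, φ x₀ + 1) < f (x₀, φ x₀) := hf _ (by simp [hs_def])
    rw [hdecomp x₀ (φ x₀ + 1), hdecomp x₀ (φ x₀)] at h1
    nlinarith
  have hkey : ∀ x : E, f (x, 0) + φ x * c ≤ f (x₀, 0) + φ x₀ * c := by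
    intro x
    have h2 : ∀ ε : ℝ, 0 < ε → f (x, 0) + (φ x + ε) * c < f (x₀, 0) + φ x₀ * c := by
      intro ε hε
      have := hf (x, φ x + ε) (by simp [hs_def, hε])
      rwa [hdecomp x (φ x + ε), hdecomp x₀ (φ x₀)] at this
    by_contra hcon
    push_neg at hcon
    have hcne : c ≠ 0 := ne_of_lt hc_neg
    have hc' : (0:ℝ) < -c := by linarith
    set ε : ℝ := (f (x, 0) + φ x * c - (f (x₀, 0) + φ x₀ * c)) / (2 * (-c)) with hε_def
    have hε : 0 < ε := div_pos (by linarith) (by linarith)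
    have hεc : ε * c = -((f (x, 0) + φ x * c - (f (x₀, 0) + φ x₀ * c)) / 2) := by
      rw [hε_def]; field_simp
    have hlt := h2 ε hε
    rw [add_mul] at hlt
    rw [hεc] at hlt
    linarith
  refine ⟨(-c)⁻¹ • (f.comp (ContinuousLinearMap.inl ℝ E ℝ)), fun x => ?_⟩
  have hx := hkey x
  have hc' : (0:ℝ) < -c := by linarith
  simp only [ContinuousLinearMap.smul_apply, ContinuousLinearMap.comp_apply,
    ContinuousLinearMap.inl_apply, smul_eq_mul]
  have hsub : f (x - x₀, (0:ℝ)) = f (x, 0) - f (x₀, 0) := by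
    have : ((x - x₀ : E), (0:ℝ)) = (x, (0:ℝ)) - (x₀, (0:ℝ)) := by simp [Prod.ext_iff]
    rw [this, map_sub]
  rw [hsub]
  have h4 : (-c)⁻¹ * (f (x, 0) - f (x₀, 0)) ≤ φ x - φ x₀ := by
    rw [inv_mul_le_iff₀ hc']
    nlinarith
  linarith

/-- Jensen's inequality with an integrable majorant instead of integrability of `φ ∘ f`. -/
lemma jensen_majorant_aux {Q : Type*} [MeasurableSpace Q] (ρ : Measure Q)
    [IsProbabilityMeasure ρ] {E : Type*} [NormedAddCommGroup E] [NormedSpace ℝ E]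
    [CompleteSpace E]
    (φ : E → ℝ) (hφ : ConvexOn ℝ Set.univ φ) (hφc : Continuous φ)
    (f : Q → E) (hf : Integrable f ρ) (G : Q → ℝ) (hG : Integrable G ρ)
    (hle : ∀ᵐ q ∂ρ, φ (f q) ≤ G q) : φ (∫ q, f q ∂ρ) ≤ ∫ q, G q ∂ρ := by
  obtain ⟨ℓ, hℓ⟩ := exists_subgradient_aux φ hφ hφc (∫ q, f q ∂ρ)
  have hfs : Integrable (fun q => f q - ∫ q, f q ∂ρ) ρ := hf.sub (integrable_const _)
  have hint : Integrable (fun q => φ (∫ q, f q ∂ρ) + ℓ (f q - ∫ q, f q ∂ρ)) ρ :=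
    (integrable_const _).add (ℓ.integrable_comp hfs)
  have hmono := integral_mono_ae hint hG (hle.mono fun q hq => (hℓ (f q)).trans hq)
  have hcomp : ∫ q, ℓ (f q - ∫ q, f q ∂ρ) ∂ρ = 0 := by
    rw [ℓ.integral_comp_comm hfs, integral_sub hf (integrable_const _), integral_const,
      probReal_univ, one_smul, sub_self, map_zero]
  rw [integral_add (integrable_const _) (ℓ.integrable_comp hfs), integral_const,
    probReal_univ, one_smul, hcomp, add_zero] at hmono
  exact hmono

/-- Double Jensen over a product of probability measures, for a kernel convex and
continuous in each argument. -/
lemma double_jensen_aux {Q Q' : Type*} [MeasurableSpace Q] [MeasurableSpace Q']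
    (ρ : Measure Q) (σ : Measure Q') [IsProbabilityMeasure ρ] [IsProbabilityMeasure σ]
    {E : Type*} [NormedAddCommGroup E] [NormedSpace ℝ E] [CompleteSpace E]
    (k : E → E → ℝ)
    (hconv1 : ∀ b, ConvexOn ℝ Set.univ (fun a => k a b))
    (hconv2 : ∀ a, ConvexOn ℝ Set.univ (fun b => k a b))
    (hcont1 : ∀ b, Continuous (fun a => k a b))
    (hcont2 : ∀ a, Continuous (fun b => k a b))
    (f : Q → E) (g : Q' → E) (hf : Integrable f ρ) (hg : Integrable g σ)
    (hF : Integrable (fun p : Q × Q' => k (f p.1) (g p.2)) (ρ.prod σ)) :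
    k (∫ q, f q ∂ρ) (∫ q', g q' ∂σ) ≤ ∫ p, k (f p.1) (g p.2) ∂(ρ.prod σ) := by
  have h1 : ∀ᵐ q ∂ρ, Integrable (fun q' => k (f q) (g q')) σ := hF.prod_right_ae
  have hG : Integrable (fun q => ∫ q', k (f q) (g q') ∂σ) ρ := hF.integral_prod_left
  have h2 : ∀ᵐ q ∂ρ, k (f q) (∫ q', g q' ∂σ) ≤ ∫ q', k (f q) (g q') ∂σ := by
    filter_upwards [h1] with q hq
    exact jensen_majorant_aux σ (fun b => k (f q) b) (hconv2 _) (hcont2 _) g hg _ hq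
      (Filter.Eventually.of_forall fun _ => le_rfl)
  have h3 := jensen_majorant_aux ρ (fun a => k a (∫ q', g q' ∂σ)) (hconv1 _) (hcont1 _)
    f hf _ hG h2
  rwa [MeasureTheory.integral_prod _ hF]

/-- If `T` and `W` are independent, the conditional expectation of `f (T ω, W ω)` given
`σ(T)` is obtained by integrating out `W` with respect to its law. -/
lemma condexp_comp_indep_aux {Ω A B E : Type*} [MeasurableSpace Ω] [MeasurableSpace A]
    [MeasurableSpace B] [NormedAddCommGroup E] [NormedSpace ℝ E] [CompleteSpace E]
    (μ : Measure Ω) [IsProbabilityMeasure μ] {T : Ω → A} {W : Ω → B}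
    (hT : Measurable T) (hW : Measurable W) (hTW : IndepFun T W μ)
    {f : A × B → E} (hf : StronglyMeasurable f)
    (hfi : Integrable (fun ω => f (T ω, W ω)) μ) :
    μ[fun ω => f (T ω, W ω)|MeasurableSpace.comap T inferInstance]
      =ᵐ[μ] fun ω => ∫ w, f (T ω, w) ∂(μ.map W) := by
  have hm : MeasurableSpace.comap T inferInstance ≤ _ := hT.comap_le
  have hlaw : μ.map (fun ω => (T ω, W ω)) = (μ.map T).prod (μ.map W) :=
    (indepFun_iff_map_prod_eq_prod_map_map hT.aemeasurable hW.aemeasurable).mp hTW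
  haveI : IsProbabilityMeasure (μ.map T) := Measure.isProbabilityMeasure_map hT.aemeasurable
  haveI : IsProbabilityMeasure (μ.map W) := Measure.isProbabilityMeasure_map hW.aemeasurable
  have hfi2 : Integrable f ((μ.map T).prod (μ.map W)) := by
    rw [← hlaw]
    exact (integrable_map_measure hf.aestronglyMeasurable
      (hT.prodMk hW).aemeasurable).mpr hfi
  have hhsm : StronglyMeasurable (fun x => ∫ w, f (x, w) ∂(μ.map W)) :=
    hf.integral_prod_right'
  have hhint : Integrable (fun x => ∫ w, f (x, w) ∂(μ.map W)) (μ.map T) :=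
    hfi2.integral_prod_left
  have hhint' : Integrable (fun ω => ∫ w, f (T ω, w) ∂(μ.map W)) μ :=
    (integrable_map_measure hhsm.aestronglyMeasurable hT.aemeasurable).mp hhint
  refine (ae_eq_condExp_of_forall_setIntegral_eq hm hfi ?_ ?_ ?_).symm
  · intro s _ _
    exact hhint'.integrableOn
  · rintro s ⟨t, ht, rfl⟩ -
    have hLHS : ∫ ω in T ⁻¹' t, (∫ w, f (T ω, w) ∂(μ.map W)) ∂μ
        = ∫ x in t, (∫ w, f (x, w) ∂(μ.map W)) ∂(μ.map T) := by
      rw [setIntegral_map ht hhsm.aestronglyMeasurable hT.aemeasurable]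
    have hpre : (fun ω => (T ω, W ω)) ⁻¹' (t ×ˢ Set.univ) = T ⁻¹' t := by
      ext ω; simp
    have hRHS : ∫ ω in T ⁻¹' t, f (T ω, W ω) ∂μ
        = ∫ p in t ×ˢ Set.univ, f p ∂((μ.map T).prod (μ.map W)) := by
      rw [← hlaw, ← hpre,
        ← setIntegral_map (ht.prod MeasurableSet.univ) hf.aestronglyMeasurable
          (hT.prodMk hW).aemeasurable]
    rw [hLHS, hRHS, ← Measure.restrict_prod_eq_prod_univ]
    have : Integrable f (((μ.map T).restrict t).prod (μ.map W)) := by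
      rw [Measure.restrict_prod_eq_prod_univ]
      exact hfi2.integrableOn
    rw [MeasureTheory.integral_prod _ this]
  · exact StronglyMeasurable.aestronglyMeasurable
      (hhsm.comp_measurable (measurable_iff_comap_le.mpr le_rfl))

lemma measurePreserving_reorg_aux {A Q : Type*} [MeasurableSpace A] [MeasurableSpace Q]
    (ρ : Measure A) (τ : Measure Q) [SFinite ρ] [SFinite τ] :
    MeasurePreserving (fun p : (A × Q) × (A × Q) => ((p.1.1, p.2.1), (p.1.2, p.2.2)))
      ((ρ.prod τ).prod (ρ.prod τ)) ((ρ.prod ρ).prod (τ.prod τ)) := by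
  have s1 := measurePreserving_prodAssoc ρ τ (ρ.prod τ)
  have e1 := (measurePreserving_prodAssoc τ ρ τ).symm MeasurableEquiv.prodAssoc
  have e2 : MeasurePreserving (Prod.map Prod.swap (id : Q → Q))
      ((τ.prod ρ).prod τ) ((ρ.prod τ).prod τ) :=
    (Measure.measurePreserving_swap (μ := τ) (ν := ρ)).prod (MeasurePreserving.id τ)
  have e3 := measurePreserving_prodAssoc ρ τ τ
  have mp_g2 : MeasurePreserving (fun r : Q × (A × Q) => (r.2.1, (r.1, r.2.2)))
      (τ.prod (ρ.prod τ)) (ρ.prod (τ.prod τ)) := by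
    have htot := e3.comp (e2.comp e1)
    have hfun : (⇑MeasurableEquiv.prodAssoc ∘ (Prod.map Prod.swap (id : Q → Q) ∘
        ⇑(MeasurableEquiv.prodAssoc (α := Q) (β := A) (γ := Q)).symm))
        = (fun r : Q × (A × Q) => (r.2.1, (r.1, r.2.2))) := by
      funext r
      rcases r with ⟨q, x, q'⟩
      rfl
    rwa [hfun] at htot
  have mp_s2 : MeasurePreserving (Prod.map (id : A → A)
      (fun r : Q × (A × Q) => (r.2.1, (r.1, r.2.2))))
      (ρ.prod (τ.prod (ρ.prod τ))) (ρ.prod (ρ.prod (τ.prod τ))) :=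
    (MeasurePreserving.id ρ).prod mp_g2
  have mp_s3 := (measurePreserving_prodAssoc ρ ρ (τ.prod τ)).symm MeasurableEquiv.prodAssoc
  have htot := mp_s3.comp (mp_s2.comp s1)
  have hfun : (⇑(MeasurableEquiv.prodAssoc (α := A) (β := A) (γ := Q × Q)).symm ∘
      (Prod.map (id : A → A) (fun r : Q × (A × Q) => (r.2.1, (r.1, r.2.2))) ∘
        ⇑(MeasurableEquiv.prodAssoc (α := A) (β := Q) (γ := A × Q))))
      = (fun p : (A × Q) × (A × Q) => ((p.1.1, p.2.1), (p.1.2, p.2.2))) := by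
    funext p
    rcases p with ⟨⟨x, q⟩, ⟨x', q'⟩⟩
    rfl
  rwa [hfun] at htot

/-- monotonicity of discrepancy in subsets, first-order case:
with `X_w, Z_{w0}, Z_{~u}` mutually independent and `k` a convex symmetric
positive-definite kernel, `E[k(G_w^{fo}, G_w^{fo'})] ≤ E[k(G_u^{fo}, G_u^{fo'})]`,
where `G_w^{fo} = E[g|σ(X_w)] - E[g]` and `G_u^{fo} = E[g|σ(X_w,Z_{w0})] - E[g]`. -/
theorem kernel_firstOrder_monotone_in_subsets
    {Ω A B C : Type*} [MeasurableSpace Ω] [MeasurableSpace A] [MeasurableSpace B]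
    [MeasurableSpace C]
    (μ : Measure Ω) [IsProbabilityMeasure μ] {n : ℕ}
    (X X' : Ω → A) (Z1 Z1' : Ω → B) (Z2 Z2' : Ω → C)
    (hX : Measurable X) (hZ1 : Measurable Z1) (hZ2 : Measurable Z2)
    (hX' : Measurable X') (hZ1' : Measurable Z1') (hZ2' : Measurable Z2')
    (hind1 : IndepFun X Z1 μ) (hind2 : IndepFun (fun ω => (X ω, Z1 ω)) Z2 μ)
    (hind1' : IndepFun X' Z1' μ) (hind2' : IndepFun (fun ω => (X' ω, Z1' ω)) Z2' μ)
    (hcopy : IdentDistrib (fun ω => (X ω, Z1 ω, Z2 ω))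
      (fun ω => (X' ω, Z1' ω, Z2' ω)) μ μ)
    (hpair : IndepFun (fun ω => (X ω, Z1 ω, Z2 ω)) (fun ω => (X' ω, Z1' ω, Z2' ω)) μ)
    (g : A × B × C → EuclideanSpace ℝ (Fin n)) (hg : Measurable g)
    (hint : Integrable (fun ω => g (X ω, Z1 ω, Z2 ω)) μ)
    (k : EuclideanSpace ℝ (Fin n) → EuclideanSpace ℝ (Fin n) → ℝ)
    (hsym : ∀ r r', k r r' = k r' r)
    (hposdef : ∀ (m : ℕ) (x : Fin m → EuclideanSpace ℝ (Fin n)) (c : Fin m → ℝ),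
      0 ≤ ∑ i, ∑ j, c i * c j * k (x i) (x j))
    (hconv : ∀ r', ConvexOn ℝ Set.univ (fun r => k r r'))
    (hmeas : Measurable (Function.uncurry k)) :
    let m := ∫ ω, g (X ω, Z1 ω, Z2 ω) ∂μ
    let Gw := fun ω =>
      (μ[fun ω => g (X ω, Z1 ω, Z2 ω)|MeasurableSpace.comap X inferInstance]) ω - m
    let Gw' := fun ω =>
      (μ[fun ω => g (X' ω, Z1' ω, Z2' ω)|MeasurableSpace.comap X' inferInstance]) ω - m
    let Gu := fun ω =>
      (μ[fun ω => g (X ω, Z1 ω, Z2 ω)|MeasurableSpace.comap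
        (fun ω => (X ω, Z1 ω)) inferInstance]) ω - m
    let Gu' := fun ω =>
      (μ[fun ω => g (X' ω, Z1' ω, Z2' ω)|MeasurableSpace.comap
        (fun ω => (X' ω, Z1' ω)) inferInstance]) ω - m
    Integrable (fun ω => k (Gw ω) (Gw' ω)) μ →
    Integrable (fun ω => k (Gu ω) (Gu' ω)) μ →
    ∫ ω, k (Gw ω) (Gw' ω) ∂μ ≤ ∫ ω, k (Gu ω) (Gu' ω) ∂μ := by
  intro m Gw Gw' Gu Gu' hIw hIu
  classical
  -- convexity and continuity of the kernel in each variable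
  have hconv2 : ∀ a, ConvexOn ℝ Set.univ (fun b => k a b) := by
    intro a
    have h : (fun b => k a b) = fun b => k b a := funext fun b => hsym a b
    rw [h]; exact hconv a
  have hcont1 : ∀ b, Continuous (fun a => k a b) := fun b =>
    continuousOn_univ.mp ((hconv b).continuousOn isOpen_univ)
  have hcont2 : ∀ a, Continuous (fun b => k a b) := fun a =>
    continuousOn_univ.mp ((hconv2 a).continuousOn isOpen_univ)
  -- basic measurability
  have hV : Measurable (fun ω => (X ω, Z1 ω, Z2 ω)) := hX.prodMk (hZ1.prodMk hZ2)
  have hV' : Measurable (fun ω => (X' ω, Z1' ω, Z2' ω)) := hX'.prodMk (hZ1'.prodMk hZ2')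
  set νa : Measure A := μ.map X with hνa_def
  set νb : Measure B := μ.map Z1 with hνb_def
  set νc : Measure C := μ.map Z2 with hνc_def
  set νbc : Measure (B × C) := νb.prod νc with hνbc_def
  haveI : IsProbabilityMeasure νa := Measure.isProbabilityMeasure_map hX.aemeasurable
  haveI : IsProbabilityMeasure νb := Measure.isProbabilityMeasure_map hZ1.aemeasurable
  haveI : IsProbabilityMeasure νc := Measure.isProbabilityMeasure_map hZ2.aemeasurable
  haveI : IsProbabilityMeasure νbc := by rw [hνbc_def]; infer_instance
  set κ : Measure (A × B × C) := νa.prod νbc with hκ_def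
  haveI : IsProbabilityMeasure κ := by rw [hκ_def]; infer_instance
  -- laws
  have hmXZ1 : μ.map (fun ω => (X ω, Z1 ω)) = νa.prod νb :=
    (indepFun_iff_map_prod_eq_prod_map_map hX.aemeasurable hZ1.aemeasurable).mp hind1
  have hmXZ12 : μ.map (fun ω => ((X ω, Z1 ω), Z2 ω)) = (νa.prod νb).prod νc := by
    rw [(indepFun_iff_map_prod_eq_prod_map_map (hX.prodMk hZ1).aemeasurable
      hZ2.aemeasurable).mp hind2, hmXZ1]
  have hmV : μ.map (fun ω => (X ω, Z1 ω, Z2 ω)) = κ := by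
    have hcomp : (fun ω => (X ω, Z1 ω, Z2 ω))
        = ⇑(MeasurableEquiv.prodAssoc (α := A) (β := B) (γ := C))
          ∘ (fun ω => ((X ω, Z1 ω), Z2 ω)) := rfl
    rw [hcomp, ← Measure.map_map MeasurableEquiv.prodAssoc.measurable
      ((hX.prodMk hZ1).prodMk hZ2), hmXZ12]
    exact Measure.prodAssoc_prod
  have hZ12 : IndepFun Z1 Z2 μ := hind2.comp measurable_snd measurable_id
  have hmZ12 : μ.map (fun ω => (Z1 ω, Z2 ω)) = νbc :=
    (indepFun_iff_map_prod_eq_prod_map_map hZ1.aemeasurable hZ2.aemeasurable).mp hZ12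
  have hXZ12 : IndepFun X (fun ω => (Z1 ω, Z2 ω)) μ := by
    refine (indepFun_iff_map_prod_eq_prod_map_map hX.aemeasurable
      (hZ1.prodMk hZ2).aemeasurable).mpr ?_
    rw [hmZ12]
    exact hmV
  -- primed laws
  have hmV' : μ.map (fun ω => (X' ω, Z1' ω, Z2' ω)) = κ :=
    (hcopy.map_eq).symm.trans hmV
  have hmX' : μ.map X' = νa :=
    ((hcopy.comp measurable_fst).map_eq).symm
  have hmZ2' : μ.map Z2' = νc :=
    ((hcopy.comp (measurable_snd.comp measurable_snd)).map_eq).symm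
  have hmZ12' : μ.map (fun ω => (Z1' ω, Z2' ω)) = νbc := by
    have h : μ.map (fun ω => (Z1' ω, Z2' ω)) = μ.map (fun ω => (Z1 ω, Z2 ω)) :=
      ((hcopy.comp measurable_snd).map_eq).symm
    rw [h]; exact hmZ12
  have hXZ12' : IndepFun X' (fun ω => (Z1' ω, Z2' ω)) μ := by
    refine (indepFun_iff_map_prod_eq_prod_map_map hX'.aemeasurable
      (hZ1'.prodMk hZ2').aemeasurable).mpr ?_
    rw [hmZ12', hmX']
    exact hmV'
  have hmVV' : μ.map (fun ω => ((X ω, Z1 ω, Z2 ω), (X' ω, Z1' ω, Z2' ω))) = κ.prod κ := by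
    rw [(indepFun_iff_map_prod_eq_prod_map_map hV.aemeasurable hV'.aemeasurable).mp hpair,
      hmV, hmV']
  have hint' : Integrable (fun ω => g (X' ω, Z1' ω, Z2' ω)) μ :=
    (hcopy.comp hg).integrable_iff.mp hint
  -- the integrated-out functions
  set Hu : A × B × C → EuclideanSpace ℝ (Fin n) :=
    fun p => (∫ c, g (p.1, p.2.1, c) ∂νc) - m with hHu_def
  set Hw : A × B × C → EuclideanSpace ℝ (Fin n) :=
    fun p => (∫ q, g (p.1, q) ∂νbc) - m with hHw_def
  have hHu_m : Measurable Hu := by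
    have h1 : StronglyMeasurable (fun p : A × B × C => ∫ c, g (p.1, p.2.1, c) ∂νc) := by
      apply StronglyMeasurable.integral_prod_right'
        (f := fun r : (A × B × C) × C => g (r.1.1, r.1.2.1, r.2))
      exact (hg.comp ((measurable_fst.fst).prodMk
        ((measurable_fst.snd.fst).prodMk measurable_snd))).stronglyMeasurable
    exact h1.measurable.sub measurable_const
  have hHw_m : Measurable Hw := by
    have h1 : StronglyMeasurable (fun p : A × B × C => ∫ q, g (p.1, q) ∂νbc) := by
      apply StronglyMeasurable.integral_prod_right'
        (f := fun r : (A × B × C) × (B × C) => g (r.1.1, r.2))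
      exact (hg.comp ((measurable_fst.fst).prodMk measurable_snd)).stronglyMeasurable
    exact h1.measurable.sub measurable_const
  -- identifications of the conditional expectations
  have hGu_eq : Gu =ᵐ[μ] fun ω => Hu (X ω, Z1 ω, Z2 ω) := by
    have h := condexp_comp_indep_aux μ (hX.prodMk hZ1) hZ2 hind2
      (f := fun p : (A × B) × C => g (p.1.1, p.1.2, p.2))
      ((hg.comp ((measurable_fst.fst).prodMk
        ((measurable_fst.snd).prodMk measurable_snd))).stronglyMeasurable) hint
    filter_upwards [h] with ω hω
    exact congrArg (fun r => r - m) hω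
  have hGw_eq : Gw =ᵐ[μ] fun ω => Hw (X ω, Z1 ω, Z2 ω) := by
    have h := condexp_comp_indep_aux μ hX (hZ1.prodMk hZ2) hXZ12
      (f := g) hg.stronglyMeasurable hint
    rw [hmZ12] at h
    filter_upwards [h] with ω hω
    exact congrArg (fun r => r - m) hω
  have hGu'_eq : Gu' =ᵐ[μ] fun ω => Hu (X' ω, Z1' ω, Z2' ω) := by
    have h := condexp_comp_indep_aux μ (hX'.prodMk hZ1') hZ2' hind2'
      (f := fun p : (A × B) × C => g (p.1.1, p.1.2, p.2))
      ((hg.comp ((measurable_fst.fst).prodMk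
        ((measurable_fst.snd).prodMk measurable_snd))).stronglyMeasurable) hint'
    rw [hmZ2'] at h
    filter_upwards [h] with ω hω
    exact congrArg (fun r => r - m) hω
  have hGw'_eq : Gw' =ᵐ[μ] fun ω => Hw (X' ω, Z1' ω, Z2' ω) := by
    have h := condexp_comp_indep_aux μ hX' (hZ1'.prodMk hZ2') hXZ12'
      (f := g) hg.stronglyMeasurable hint'
    rw [hmZ12'] at h
    filter_upwards [h] with ω hω
    exact congrArg (fun r => r - m) hω
  -- integrability over κ
  have hGuInt : Integrable Gu μ := integrable_condExp.sub (integrable_const m)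
  have hGwInt : Integrable Gw μ := integrable_condExp.sub (integrable_const m)
  have hHu_int : Integrable Hu κ := by
    rw [← hmV]
    exact (integrable_map_measure hHu_m.aestronglyMeasurable hV.aemeasurable).mpr
      (hGuInt.congr hGu_eq)
  have hg_int_κ : Integrable g κ := by
    rw [← hmV]
    exact (integrable_map_measure hg.stronglyMeasurable.aestronglyMeasurable
      hV.aemeasurable).mpr hint
  -- transfer to the product law
  have hpairM : Measurable (fun ω => ((X ω, Z1 ω, Z2 ω), (X' ω, Z1' ω, Z2' ω))) :=
    hV.prodMk hV'
  have hΦw_m : Measurable (fun p : (A × B × C) × (A × B × C) => k (Hw p.1) (Hw p.2)) :=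
    hmeas.comp ((hHw_m.comp measurable_fst).prodMk (hHw_m.comp measurable_snd))
  have hΦu_m : Measurable (fun p : (A × B × C) × (A × B × C) => k (Hu p.1) (Hu p.2)) :=
    hmeas.comp ((hHu_m.comp measurable_fst).prodMk (hHu_m.comp measurable_snd))
  have hw_ae : (fun ω => k (Gw ω) (Gw' ω))
      =ᵐ[μ] fun ω => k (Hw (X ω, Z1 ω, Z2 ω)) (Hw (X' ω, Z1' ω, Z2' ω)) := by
    filter_upwards [hGw_eq, hGw'_eq] with ω h1 h2
    exact congr (congrArg k h1) h2
  have hu_ae : (fun ω => k (Gu ω) (Gu' ω))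
      =ᵐ[μ] fun ω => k (Hu (X ω, Z1 ω, Z2 ω)) (Hu (X' ω, Z1' ω, Z2' ω)) := by
    filter_upwards [hGu_eq, hGu'_eq] with ω h1 h2
    exact congr (congrArg k h1) h2
  have hIwP : Integrable (fun p : (A × B × C) × (A × B × C) => k (Hw p.1) (Hw p.2))
      (κ.prod κ) := by
    rw [← hmVV']
    exact (integrable_map_measure hΦw_m.aestronglyMeasurable hpairM.aemeasurable).mpr
      (hIw.congr hw_ae)
  have hIuP : Integrable (fun p : (A × B × C) × (A × B × C) => k (Hu p.1) (Hu p.2))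
      (κ.prod κ) := by
    rw [← hmVV']
    exact (integrable_map_measure hΦu_m.aestronglyMeasurable hpairM.aemeasurable).mpr
      (hIu.congr hu_ae)
  have hEw : ∫ ω, k (Gw ω) (Gw' ω) ∂μ
      = ∫ p, k (Hw p.1) (Hw p.2) ∂(κ.prod κ) := by
    rw [integral_congr_ae hw_ae, ← hmVV',
      integral_map hpairM.aemeasurable hΦw_m.aestronglyMeasurable]
  have hEu : ∫ ω, k (Gu ω) (Gu' ω) ∂μ
      = ∫ p, k (Hu p.1) (Hu p.2) ∂(κ.prod κ) := by
    rw [integral_congr_ae hu_ae, ← hmVV',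
      integral_map hpairM.aemeasurable hΦu_m.aestronglyMeasurable]
  rw [hEw, hEu]
  -- reorganize the product measure
  have hreorg : MeasurePreserving
      (fun p : (A × (B × C)) × (A × (B × C)) => ((p.1.1, p.2.1), (p.1.2, p.2.2)))
      (κ.prod κ) ((νa.prod νa).prod (νbc.prod νbc)) := by
    rw [hκ_def]
    exact measurePreserving_reorg_aux νa νbc
  set Ψu : (A × A) × ((B × C) × (B × C)) → ℝ :=
    fun r => k (Hu (r.1.1, r.2.1)) (Hu (r.1.2, r.2.2)) with hΨu_def
  set Ψw : (A × A) × ((B × C) × (B × C)) → ℝ :=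
    fun r => k (Hw (r.1.1, r.2.1)) (Hw (r.1.2, r.2.2)) with hΨw_def
  have hΨu_m : Measurable Ψu :=
    hmeas.comp ((hHu_m.comp ((measurable_fst.fst).prodMk measurable_snd.fst)).prodMk
      (hHu_m.comp ((measurable_fst.snd).prodMk measurable_snd.snd)))
  have hΨw_m : Measurable Ψw :=
    hmeas.comp ((hHw_m.comp ((measurable_fst.fst).prodMk measurable_snd.fst)).prodMk
      (hHw_m.comp ((measurable_fst.snd).prodMk measurable_snd.snd)))
  have hIuR : Integrable Ψu ((νa.prod νa).prod (νbc.prod νbc)) := by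
    rw [← hreorg.map_eq]
    refine (integrable_map_measure hΨu_m.aestronglyMeasurable
      hreorg.measurable.aemeasurable).mpr ?_
    exact hIuP.congr (Filter.Eventually.of_forall fun p => by
      rcases p with ⟨⟨x, q⟩, ⟨x', q'⟩⟩; rfl)
  have hIwR : Integrable Ψw ((νa.prod νa).prod (νbc.prod νbc)) := by
    rw [← hreorg.map_eq]
    refine (integrable_map_measure hΨw_m.aestronglyMeasurable
      hreorg.measurable.aemeasurable).mpr ?_
    exact hIwP.congr (Filter.Eventually.of_forall fun p => by
      rcases p with ⟨⟨x, q⟩, ⟨x', q'⟩⟩; rfl)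
  have hEuR : ∫ p, k (Hu p.1) (Hu p.2) ∂(κ.prod κ)
      = ∫ r, Ψu r ∂((νa.prod νa).prod (νbc.prod νbc)) := by
    rw [← hreorg.map_eq, integral_map hreorg.measurable.aemeasurable
      hΨu_m.aestronglyMeasurable]
  have hEwR : ∫ p, k (Hw p.1) (Hw p.2) ∂(κ.prod κ)
      = ∫ r, Ψw r ∂((νa.prod νa).prod (νbc.prod νbc)) := by
    rw [← hreorg.map_eq, integral_map hreorg.measurable.aemeasurable
      hΨw_m.aestronglyMeasurable]
  rw [hEwR, hEuR]
  have hPw : ∫ r, Ψw r ∂((νa.prod νa).prod (νbc.prod νbc))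
      = ∫ xx, ∫ qq, Ψw (xx, qq) ∂(νbc.prod νbc) ∂(νa.prod νa) :=
    MeasureTheory.integral_prod _ hIwR
  have hPu : ∫ r, Ψu r ∂((νa.prod νa).prod (νbc.prod νbc))
      = ∫ xx, ∫ qq, Ψu (xx, qq) ∂(νbc.prod νbc) ∂(νa.prod νa) :=
    MeasureTheory.integral_prod _ hIuR
  rw [hPw, hPu]
  -- a.e. facts in the first coordinates
  have hfull1 : ∀ᵐ x ∂νa, Integrable (fun q => Hu (x, q)) νbc
      ∧ Integrable (fun q => g (x, q)) νbc := by
    have a1 : ∀ᵐ x ∂νa, Integrable (fun q => Hu (x, q)) νbc := by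
      have := hHu_int
      rw [hκ_def] at this
      exact this.prod_right_ae
    have a2 : ∀ᵐ x ∂νa, Integrable (fun q => g (x, q)) νbc := by
      have := hg_int_κ
      rw [hκ_def] at this
      exact this.prod_right_ae
    exact a1.and a2
  have hq1 : ∀ᵐ xx ∂(νa.prod νa), Integrable (fun q => Hu (xx.1, q)) νbc
      ∧ Integrable (fun q => g (xx.1, q)) νbc :=
    Measure.quasiMeasurePreserving_fst.ae hfull1
  have hq2 : ∀ᵐ xx ∂(νa.prod νa), Integrable (fun q => Hu (xx.2, q)) νbc
      ∧ Integrable (fun q => g (xx.2, q)) νbc :=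
    Measure.quasiMeasurePreserving_snd.ae hfull1
  have hq3 : ∀ᵐ xx ∂(νa.prod νa),
      Integrable (fun qq => Ψu (xx, qq)) (νbc.prod νbc) := hIuR.prod_right_ae
  -- the key pointwise value of the averaged function
  have hval : ∀ x : A, Integrable (fun q => Hu (x, q)) νbc →
      Integrable (fun q => g (x, q)) νbc →
      ∫ q, Hu (x, q) ∂νbc = (∫ q, g (x, q) ∂νbc) - m := by
    intro x hInt1 hInt2
    have hφint : Integrable (fun q : B × C => ∫ c, g (x, q.1, c) ∂νc) νbc := by
      have := hInt1.add (integrable_const m)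
      exact this.congr (Filter.Eventually.of_forall fun q => by
        show Hu (x, q) + m = _
        rw [hHu_def]
        simp)
    have e1 : ∫ q, Hu (x, q) ∂νbc
        = (∫ q : B × C, ∫ c, g (x, q.1, c) ∂νc ∂νbc) - m := by
      rw [hHu_def]
      rw [integral_sub hφint (integrable_const m), integral_const, probReal_univ, one_smul]
    have e2 : (∫ q : B × C, ∫ c, g (x, q.1, c) ∂νc ∂νbc)
        = ∫ b, ∫ c, g (x, b, c) ∂νc ∂νb := by
      have h3 : (∫ q : B × C, ∫ c, g (x, q.1, c) ∂νc ∂νbc)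
          = ∫ b, ∫ _ : C, (∫ c, g (x, b, c) ∂νc) ∂νc ∂νb :=
        MeasureTheory.integral_prod _ hφint
      rw [h3]
      refine integral_congr_ae (Filter.Eventually.of_forall fun b => ?_)
      simp
    have e3 : (∫ q, g (x, q) ∂νbc) = ∫ b, ∫ c, g (x, b, c) ∂νc ∂νb :=
      MeasureTheory.integral_prod _ hInt2
    rw [e1, e2, ← e3]
  -- conclude by the double Jensen inequality
  refine integral_mono_ae hIwR.integral_prod_left hIuR.integral_prod_left ?_
  filter_upwards [hq1, hq2, hq3] with xx h1 h2 h3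
  have hLHS : ∫ qq, Ψw (xx, qq) ∂(νbc.prod νbc)
      = k ((∫ q, g (xx.1, q) ∂νbc) - m) ((∫ q, g (xx.2, q) ∂νbc) - m) := by
    have hcst : (fun qq : (B × C) × (B × C) => Ψw (xx, qq))
        = fun _ => k ((∫ q, g (xx.1, q) ∂νbc) - m) ((∫ q, g (xx.2, q) ∂νbc) - m) := by
      funext qq; rfl
    rw [hcst, integral_const, probReal_univ, one_smul]
  rw [hLHS]
  have hJ := double_jensen_aux νbc νbc k hconv hconv2 hcont1 hcont2
    (fun q => Hu (xx.1, q)) (fun q => Hu (xx.2, q)) h1.1 h2.1 h3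
  rw [hval xx.1 h1.1 h1.2, hval xx.2 h2.1 h2.2] at hJ
  exact hJ
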